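/- Let c be a finite non-empty binary word. Then F(c) = F(c^∞), where c^∞ denotes the periodic infinite sequence obtained by repeating c. -/
import Mathlib


open Filter MeasureTheory

/-- Left shift by `k` on infinite binary sequences. -/
def shiftSeq (k : ℕ) (x : ℕ → Bool) : ℕ → Bool := fun n => x (n + k)

/-- Strict lexicographic order on infinite binary sequences (`false < true`). -/
def seqLt (a b : ℕ → Bool) : Prop :=
  ∃ n, (∀ k < n, a k = b k) ∧ a n = false ∧ b n = true

def seqLe (a b : ℕ → Bool) : Prop := a = b ∨ seqLt a b

/-- A finite word viewed as an infinite sequence (padded with zeros). -/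
def wordSeq (w : List Bool) : ℕ → Bool := fun n => w.getD n false

/-- Bitwise complement of an infinite sequence. -/
def complSeq (a : ℕ → Bool) : ℕ → Bool := fun n => ! a n

/-- `F(c) = {x : c' ≥ σⁿ(x) ≥ c for all n ≥ 0}` for an infinite bound `c`. -/
def Fset (c : ℕ → Bool) : Set (ℕ → Bool) :=
  {x | ∀ n : ℕ, seqLe c (shiftSeq n x) ∧ seqLe (shiftSeq n x) (complSeq c)}

/-- The real number in `[0,1]` with binary expansion `x`. -/
noncomputable def seqVal (x : ℕ → Bool) : ℝ :=
  ∑' n : ℕ, (cond (x n) (1 : ℝ) 0) / 2 ^ (n + 1)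

/-- The periodic infinite sequence `w^∞`. -/
def perSeq (w : List Bool) : ℕ → Bool := fun n => w.getD (n % w.length) false

/-- `s̃`: the word `s` with its last symbol inverted. -/
def flipLast (s : List Bool) : List Bool :=
  s.dropLast ++ [! s.getD (s.length - 1) false]

/-- `f(s) = s̃ s'` where `s'` is the bitwise complement of `s`. -/
def fW (s : List Bool) : List Bool := flipLast s ++ s.map (fun b => !b)

/-- A finite word `s` is shift-bounded: `s' > σⁿ(s) > s` for `0 < n < |s|`,
comparisons via the embedding of finite words into infinite sequences
(`s` padded with zeros, `s'` is the complement of the padded sequence);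
by convention `[false]` is excluded. -/
def ShiftBounded (s : List Bool) : Prop :=
  s ≠ [false] ∧ ∀ n, 0 < n → n < s.length →
    seqLt (wordSeq s) (wordSeq (s.drop n)) ∧
    seqLt (wordSeq (s.drop n)) (complSeq (wordSeq s))

/-- Prepend a finite word to an infinite sequence. -/
def appendSeq (w : List Bool) (t : ℕ → Bool) : ℕ → Bool :=
  fun n => if n < w.length then w.getD n false else t (n - w.length)

/-- `w^k`: the word `w` repeated `k` times. -/
def repWord (k : ℕ) (w : List Bool) : List Bool :=
  (List.replicate k w).foldr (· ++ ·) []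

/-- The infinite concatenation of the finite words `g 0, g 1, g 2, …`
(assuming all are nonempty, the `n`-th symbol is obtained from the first
`n+1` blocks). -/
def concatSeq (g : ℕ → List Bool) : ℕ → Bool :=
  fun n => (((List.range (n + 1)).map g).foldr (· ++ ·) []).getD n false

lemma seqLt_asymm {a b : ℕ → Bool} (h : seqLt a b) (h' : seqLt b a) : False := by
  obtain ⟨n, hn, han, hbn⟩ := h
  obtain ⟨m, hm, hbm, ham⟩ := h'
  rcases lt_trichotomy n m with hlt | hEq | hlt
  · have := hm n hlt; rw [han, hbn] at this; simp at this
  · subst hEq; rw [han] at ham; simp at ham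
  · have := hn m hlt; rw [ham, hbm] at this; simp at this

lemma seqLt_irrefl {a : ℕ → Bool} (h : seqLt a a) : False := by
  obtain ⟨n, _, h1, h2⟩ := h; rw [h1] at h2; simp at h2

lemma seqLe_or_lt (a b : ℕ → Bool) : seqLe a b ∨ seqLt b a := by
  by_cases h : a = b
  · exact Or.inl (Or.inl h)
  · have hex : ∃ n, a n ≠ b n := Function.ne_iff.mp h
    have hne : a (Nat.find hex) ≠ b (Nat.find hex) := Nat.find_spec hex
    have hagree : ∀ k < Nat.find hex, a k = b k := fun k hk => not_not.mp (Nat.find_min hex hk)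
    cases ha : a (Nat.find hex) <;> cases hb : b (Nat.find hex)
    · rw [ha, hb] at hne; simp at hne
    · exact Or.inl (Or.inr ⟨_, hagree, ha, hb⟩)
    · exact Or.inr ⟨_, fun k hk => (hagree k hk).symm, hb, ha⟩
    · rw [ha, hb] at hne; simp at hne

lemma seqLe_of_pointwise {a b : ℕ → Bool} (h : ∀ k, a k = true → b k = true) : seqLe a b := by
  rcases seqLe_or_lt a b with h1 | h1
  · exact h1
  · obtain ⟨n, _, hbn, han⟩ := h1
    have := h n han; rw [hbn] at this; simp at this

lemma seqLe_trans {a b c : ℕ → Bool} (h1 : seqLe a b) (h2 : seqLe b c) : seqLe a c := by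
  rcases h1 with rfl | ⟨n, hn, han, hbn⟩
  · exact h2
  rcases h2 with rfl | ⟨m, hm, hbm, hcm⟩
  · exact Or.inr ⟨n, hn, han, hbn⟩
  rcases lt_trichotomy n m with h | hEq | h
  · exact Or.inr ⟨n, fun k hk => (hn k hk).trans (hm k (hk.trans h)), han,
      (hm n h).symm.trans hbn⟩
  · subst hEq
    exact Or.inr ⟨n, fun k hk => (hn k hk).trans (hm k hk), han, hcm⟩
  · exact Or.inr ⟨m, fun k hk => (hn k (hk.trans h)).trans (hm k hk),
      (hn m h).trans hbm, hcm⟩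

lemma seqLe_compl {a b : ℕ → Bool} (h : seqLe a b) : seqLe (complSeq b) (complSeq a) := by
  rcases h with rfl | ⟨n, hn, ha, hb⟩
  · exact Or.inl rfl
  · exact Or.inr ⟨n, fun k hk => by simp [complSeq, hn k hk],
      by simp [complSeq, hb], by simp [complSeq, ha]⟩

lemma compl_compl' (a : ℕ → Bool) : complSeq (complSeq a) = a :=
  funext fun n => by simp [complSeq]

lemma shift_compl (n : ℕ) (a : ℕ → Bool) :
    shiftSeq n (complSeq a) = complSeq (shiftSeq n a) := rfl

lemma perSeq_period (c : List Bool) (k q : ℕ) :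
    perSeq c (k + q * c.length) = perSeq c k := by
  simp [perSeq, Nat.add_mul_mod_self_right]

lemma wordSeq_eq_perSeq {c : List Bool} {k : ℕ} (hk : k < c.length) :
    wordSeq c k = perSeq c k := by
  simp [wordSeq, perSeq, Nat.mod_eq_of_lt hk]

lemma key {c : List Bool} (hc : c ≠ []) {y : ℕ → Bool}
    (H : ∀ n, seqLe (wordSeq c) (shiftSeq n y)) :
    ∀ n, seqLe (perSeq c) (shiftSeq n y) := by
  intro n
  rcases seqLe_or_lt (perSeq c) (shiftSeq n y) with h | h
  · exact h
  exfalso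
  obtain ⟨m, hm, hym, hpm⟩ := h
  set L := c.length with hL
  have hL0 : 0 < L := List.length_pos_iff.mpr hc
  set r := m % L with hr'
  set q := m / L with hq'
  have hr : r < L := Nat.mod_lt _ hL0
  have hmeq : r + q * L = m := by rw [hr', hq']; exact Nat.mod_add_div' m L
  have hlt : seqLt (shiftSeq (n + q * L) y) (wordSeq c) := by
    refine ⟨r, ?_, ?_, ?_⟩
    · intro k hk
      have hkm : k + q * L < m := by omega
      have h1 : shiftSeq (n + q * L) y k = shiftSeq n y (k + q * L) := by
        show y (k + (n + q * L)) = y (k + q * L + n); ring_nf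
      rw [h1, hm _ hkm, perSeq_period]
      exact (wordSeq_eq_perSeq (by omega)).symm
    · have h1 : shiftSeq (n + q * L) y r = shiftSeq n y m := by
        show y (r + (n + q * L)) = y (m + n)
        rw [show r + (n + q * L) = (r + q * L) + n by ring, hmeq]
      rw [h1, hym]
    · rw [wordSeq_eq_perSeq hr, ← perSeq_period c r q, hmeq]; exact hpm
  rcases H (n + q * L) with hEq | hlt2
  · rw [← hEq] at hlt; exact seqLt_irrefl hlt
  · exact seqLt_asymm hlt hlt2

theorem stmt1 (c : List Bool) (hc : c ≠ []) :
    Fset (wordSeq c) = Fset (perSeq c) := by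
  ext x
  simp only [Fset, Set.mem_setOf_eq]
  constructor
  · intro h n
    have hlow := key hc (fun k => (h k).1) n
    have hupC : ∀ k, seqLe (wordSeq c) (shiftSeq k (complSeq x)) := by
      intro k
      have h2 := seqLe_compl (h k).2
      rw [compl_compl'] at h2
      rw [shift_compl]
      exact h2
    have hup := key hc hupC n
    refine ⟨hlow, ?_⟩
    have h3 := seqLe_compl hup
    rw [shift_compl, compl_compl'] at h3
    exact h3
  · intro h n
    have h1 : seqLe (wordSeq c) (perSeq c) := by
      apply seqLe_of_pointwise
      intro k hk
      have hkl : k < c.length := by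
        by_contra hko
        rw [wordSeq, List.getD_eq_default _ _ (not_lt.mp hko)] at hk
        simp at hk
      rw [← wordSeq_eq_perSeq hkl]; exact hk
    exact ⟨seqLe_trans h1 (h n).1, seqLe_trans (h n).2 (seqLe_compl h1)⟩
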